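/- arXiv:1209.4691 — 2 statements merged into one kernel-verified Lean document; each statement's English description precedes it below -/
import Mathlib

section
/- Let ω₁ and ω₂ be infinite words over finite integer alphabets, each with bounded additive complexity, and suppose that slope(ω₁) and slope(ω₂) both exist and slope(ω₁) ≠ slope(ω₂). Then the set of finite words that are factors of both ω₁ and ω₂ is finite. -/
/-- `B` is a factor of the infinite word `ω`. -/
def Factor (ω : ℕ → ℤ) (B : List ℤ) : Prop :=
  ∃ m : ℕ, B = (List.range B.length).map (fun i => ω (m + i))

/-- `ω` has bounded additive complexity: there is `M` such that for every `n ≥ 1`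
the set of sums of factors of length `n` has at most `M` elements. -/
def BoundedAddComplexity (ω : ℕ → ℤ) : Prop :=
  ∃ M : ℕ, ∀ n : ℕ, 1 ≤ n →
    ∃ T : Finset ℤ, T.card ≤ M ∧
      ∀ B : List ℤ, Factor ω B → B.length = n → B.sum ∈ T

/-- The slope of a finite word. -/
def wordSlope (B : List ℤ) : ℚ := (B.sum : ℚ) / (B.length : ℚ)

/-- `ω` has slope `L`. -/
def HasSlope (ω : ℕ → ℤ) (L : ℝ) : Prop :=
  Filter.Tendsto (fun n : ℕ => (∑ i ∈ Finset.range n, (ω i : ℝ)) / n)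
    Filter.atTop (nhds L)

private lemma list_sum_range (g : ℕ → ℤ) (n : ℕ) :
    ((List.range n).map g).sum = ∑ i ∈ Finset.range n, g i := by
  induction n with
  | zero => simp
  | succ k ih => simp [List.range_succ, Finset.sum_range_succ, ih]

private lemma ivt (f : ℕ → ℤ) (d : ℤ) (hstep : ∀ m, |f (m+1) - f m| ≤ d)
    (c : ℤ) (m : ℕ) (h0 : f 0 < c) (hm : c ≤ f m) :
    ∃ k, c ≤ f k ∧ f k < c + d := by
  classical
  have hne : ∃ k, c ≤ f k := ⟨m, hm⟩
  have hks : c ≤ f (Nat.find hne) := Nat.find_spec hne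
  have hk0 : Nat.find hne ≠ 0 := by
    intro h
    rw [h] at hks; exact absurd hks (not_le.mpr h0)
  obtain ⟨j, hj⟩ := Nat.exists_eq_succ_of_ne_zero hk0
  have hjlt : f j < c := by
    by_contra hc
    push_neg at hc
    exact Nat.find_min hne (by omega) hc
  refine ⟨Nat.find hne, hks, ?_⟩
  rw [hj]
  have := abs_le.mp (hstep j)
  linarith [this.2]

private lemma walk_bound (f : ℕ → ℤ) (T : Finset ℤ) (d : ℤ) (hd : 0 < d)
    (hT : ∀ m, f m ∈ T) (hstep : ∀ m, |f (m+1) - f m| ≤ d) (m : ℕ) :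
    f m - f 0 ≤ d * T.card := by
  by_contra hcon
  push_neg at hcon
  have key : ∀ j : ℕ, ∃ k : ℕ, j ≤ T.card →
      (f 0 + d * j ≤ f k ∧ f k < f 0 + d * j + d) := by
    intro j
    rcases Nat.eq_zero_or_pos j with rfl | hjpos
    · exact ⟨0, fun _ => ⟨by simp, by simp; linarith⟩⟩
    · by_cases hj : j ≤ T.card
      · have hj' : (j : ℤ) ≤ (T.card : ℤ) := by exact_mod_cast hj
        have hjz : (1:ℤ) ≤ (j:ℤ) := by exact_mod_cast hjpos
        obtain ⟨k, hk1, hk2⟩ := ivt f d hstep (f 0 + d * j) m (by nlinarith) (by nlinarith)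
        exact ⟨k, fun _ => ⟨hk1, hk2⟩⟩
      · exact ⟨0, fun h => absurd h hj⟩
  choose g hg using key
  have hcard := Finset.card_le_card_of_injOn (fun j => f (g j))
    (s := Finset.range (T.card + 1)) (t := T)
    (fun a _ => hT (g a))
    (by
      intro a ha b hb hab
      simp only [Finset.coe_range, Set.mem_Iio] at ha hb
      have h1 := hg a (by omega)
      have h2 := hg b (by omega)
      have habe : f (g a) = f (g b) := hab
      have ha1 : (a:ℤ) < (b:ℤ) + 1 := by nlinarith [h1.1, h1.2, h2.1, h2.2]
      have ha2 : (b:ℤ) < (a:ℤ) + 1 := by nlinarith [h1.1, h1.2, h2.1, h2.2]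
      omega)
  simp only [Finset.card_range] at hcard
  omega

private lemma walk_abs (f : ℕ → ℤ) (T : Finset ℤ) (d : ℤ) (hd : 0 < d)
    (hT : ∀ m, f m ∈ T) (hstep : ∀ m, |f (m+1) - f m| ≤ d) (m : ℕ) :
    |f m - f 0| ≤ d * T.card := by
  rw [abs_sub_le_iff]
  constructor
  · exact walk_bound f T d hd hT hstep m
  · have h2 := walk_bound (fun k => -f k) (T.image (fun x => -x)) d hd
      (fun k => Finset.mem_image_of_mem _ (hT k))
      (fun k => by
        rw [show -f (k+1) - -f k = -(f (k+1) - f k) by ring, abs_neg]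
        exact hstep k) m
    rw [Finset.card_image_of_injective _ neg_injective] at h2
    have h3 : -f m - -f 0 ≤ d * T.card := h2
    linarith

private lemma factor_sum_bound (ω : ℕ → ℤ) (K : ℤ) (hK0 : 0 < K) (hK : ∀ n, |ω n| ≤ K)
    (M : ℕ) (hM : ∀ n : ℕ, 1 ≤ n → ∃ T : Finset ℤ, T.card ≤ M ∧
      ∀ B : List ℤ, Factor ω B → B.length = n → B.sum ∈ T)
    (B : List ℤ) (hB : Factor ω B) :
    |B.sum - ∑ i ∈ Finset.range B.length, ω i| ≤ 2 * K * (M:ℤ) := by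
  obtain ⟨m, hm⟩ := hB
  rcases Nat.eq_zero_or_pos B.length with h0 | h1
  · rw [List.length_eq_zero_iff.mp h0]
    simpa using by positivity
  obtain ⟨T, hTcard, hTmem⟩ := hM B.length h1
  have hmemT : ∀ k, (∑ i ∈ Finset.range B.length, ω (k + i)) ∈ T := by
    intro k
    have hlen : ((List.range B.length).map (fun i => ω (k + i))).length = B.length := by simp
    have hfac : Factor ω ((List.range B.length).map (fun i => ω (k + i))) :=
      ⟨k, by rw [hlen]⟩
    have := hTmem _ hfac hlen
    rwa [list_sum_range] at this
  have hstep : ∀ k, |(∑ i ∈ Finset.range B.length, ω ((k+1) + i))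
      - (∑ i ∈ Finset.range B.length, ω (k + i))| ≤ 2 * K := by
    intro k
    have h1' : ∑ i ∈ Finset.range (B.length + 1), ω (k + i)
        = (∑ i ∈ Finset.range B.length, ω (k + i)) + ω (k + B.length) :=
      Finset.sum_range_succ _ _
    have h2' : ∑ i ∈ Finset.range (B.length + 1), ω (k + i)
        = (∑ i ∈ Finset.range B.length, ω (k + (i + 1))) + ω (k + 0) :=
      Finset.sum_range_succ' _ _
    have h3' : ∑ i ∈ Finset.range B.length, ω (k + (i + 1))
        = ∑ i ∈ Finset.range B.length, ω ((k+1) + i) :=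
      Finset.sum_congr rfl (fun i _ => by rw [show k + (i+1) = (k+1) + i by omega])
    have hid : (∑ i ∈ Finset.range B.length, ω ((k+1) + i))
        - (∑ i ∈ Finset.range B.length, ω (k + i)) = ω (k + B.length) - ω (k + 0) := by
      rw [← h3']; linarith
    rw [hid, abs_le]
    have ha := abs_le.mp (hK (k + B.length))
    have hb := abs_le.mp (hK (k + 0))
    constructor <;> linarith [ha.1, ha.2, hb.1, hb.2]
  have hfinal := walk_abs (fun k => ∑ i ∈ Finset.range B.length, ω (k + i)) T (2*K)
    (by linarith) hmemT hstep m
  have hsum : B.sum = ∑ i ∈ Finset.range B.length, ω (m + i) := by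
    nth_rewrite 1 [hm]
    exact list_sum_range _ _
  have h0eq : ∑ i ∈ Finset.range B.length, ω (0 + i)
      = ∑ i ∈ Finset.range B.length, ω i :=
    Finset.sum_congr rfl (fun i _ => by rw [Nat.zero_add])
  have hcard : (2*K) * (T.card:ℤ) ≤ 2*K*(M:ℤ) := by
    have hc : (T.card : ℤ) ≤ (M:ℤ) := by exact_mod_cast hTcard
    nlinarith
  rw [hsum, ← h0eq]
  exact le_trans hfinal hcard

private lemma exists_bound (ω : ℕ → ℤ) (h : (Set.range ω).Finite) :
    ∃ K : ℤ, 0 < K ∧ ∀ n, |ω n| ≤ K := by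
  refine ⟨(h.toFinset.sum fun x => |x|) + 1, ?_, ?_⟩
  · have : (0:ℤ) ≤ h.toFinset.sum fun x => |x| :=
      Finset.sum_nonneg fun x _ => abs_nonneg x
    linarith
  · intro n
    have hmem : ω n ∈ h.toFinset := by
      rw [Set.Finite.mem_toFinset]; exact ⟨n, rfl⟩
    have := Finset.single_le_sum (f := fun x => |x|) (fun x _ => abs_nonneg x) hmem
    linarith

private lemma slope_far (ω : ℕ → ℤ) (hfin : (Set.range ω).Finite)
    (hb : BoundedAddComplexity ω) (L : ℝ) (hs : HasSlope ω L) (ε : ℝ) (hε : 0 < ε) :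
    ∃ N : ℕ, 1 ≤ N ∧ ∀ B : List ℤ, Factor ω B → N ≤ B.length →
      |(B.sum : ℝ) / B.length - L| < ε := by
  obtain ⟨K, hK0, hK⟩ := exists_bound ω hfin
  obtain ⟨M, hM⟩ := hb
  set C : ℤ := 2 * K * (M:ℤ) with hC
  have hC0 : (0:ℤ) ≤ C := by positivity
  have hs' : Filter.Tendsto (fun n : ℕ => (∑ i ∈ Finset.range n, (ω i : ℝ)) / n)
      Filter.atTop (nhds L) := hs
  obtain ⟨N1, hN1⟩ := (Metric.tendsto_atTop.mp hs') (ε/2) (by linarith)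
  obtain ⟨N2, hN2⟩ := exists_nat_gt (2 * (C:ℝ) / ε)
  refine ⟨max 1 (max N1 N2), le_max_left _ _, ?_⟩
  intro B hfac hlen
  have hn1 : 1 ≤ B.length := le_trans (le_max_left _ _) hlen
  have hnpos : (0:ℝ) < (B.length : ℝ) := by exact_mod_cast hn1
  have hbound := factor_sum_bound ω K hK0 hK M hM B hfac
  have hboundR : |(B.sum : ℝ) - ((∑ i ∈ Finset.range B.length, ω i : ℤ) : ℝ)| ≤ (C:ℝ) := by
    exact_mod_cast hbound
  have hclose := hN1 B.length
    (le_trans (le_trans (le_max_left _ _) (le_max_right 1 _)) hlen)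
  rw [Real.dist_eq] at hclose
  have hcast : (∑ i ∈ Finset.range B.length, (ω i : ℝ))
      = ((∑ i ∈ Finset.range B.length, ω i : ℤ) : ℝ) := by push_cast; ring
  have hCn : (C:ℝ) / B.length < ε/2 := by
    have hN2' : (N2:ℝ) ≤ (B.length : ℝ) := by
      exact_mod_cast le_trans (le_trans (le_max_right N1 _) (le_max_right 1 _)) hlen
    rw [div_lt_iff₀ hnpos]
    have hlt : 2 * (C:ℝ) / ε < (B.length:ℝ) := lt_of_lt_of_le hN2 hN2'
    rw [div_lt_iff₀ hε] at hlt
    linarith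
  have h1 : |(B.sum:ℝ) - (∑ i ∈ Finset.range B.length, (ω i:ℝ))| ≤ (C:ℝ) := by
    rw [hcast]; exact hboundR
  have h2 : |(B.sum:ℝ)/B.length - (∑ i ∈ Finset.range B.length, (ω i:ℝ))/B.length|
      ≤ (C:ℝ)/B.length := by
    rw [div_sub_div_same, abs_div, abs_of_pos hnpos]
    gcongr
  calc |(B.sum:ℝ)/B.length - L|
      ≤ |(B.sum:ℝ)/B.length - (∑ i ∈ Finset.range B.length, (ω i:ℝ))/B.length|
        + |(∑ i ∈ Finset.range B.length, (ω i:ℝ))/B.length - L| := abs_sub_le _ _ _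
    _ < ε := by linarith

/-- Words with bounded additive complexity and different slopes have only finitely
many common factors. -/
theorem stmt3 (ω₁ ω₂ : ℕ → ℤ)
    (h1 : (Set.range ω₁).Finite) (h2 : (Set.range ω₂).Finite)
    (hb1 : BoundedAddComplexity ω₁) (hb2 : BoundedAddComplexity ω₂)
    (L₁ L₂ : ℝ) (hs1 : HasSlope ω₁ L₁) (hs2 : HasSlope ω₂ L₂) (hne : L₁ ≠ L₂) :
    {B : List ℤ | Factor ω₁ B ∧ Factor ω₂ B}.Finite := by
  classical
  have hεpos : 0 < |L₁ - L₂| / 2 := by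
    have h : L₁ - L₂ ≠ 0 := sub_ne_zero_of_ne hne
    have := abs_pos.mpr h
    linarith
  obtain ⟨N1, hN1ge, hN1⟩ := slope_far ω₁ h1 hb1 L₁ hs1 _ hεpos
  obtain ⟨N2, hN2ge, hN2⟩ := slope_far ω₂ h2 hb2 L₂ hs2 _ hεpos
  have hlen : ∀ B : List ℤ, Factor ω₁ B → Factor ω₂ B → B.length < max N1 N2 := by
    intro B hf1 hf2
    by_contra h
    push_neg at h
    have e1 := hN1 B hf1 (le_trans (le_max_left _ _) h)
    have e2 := hN2 B hf2 (le_trans (le_max_right _ _) h)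
    have habs : |L₁ - L₂| < |L₁ - L₂| := by
      calc |L₁ - L₂| ≤ |L₁ - (B.sum:ℝ)/B.length| + |(B.sum:ℝ)/B.length - L₂| :=
            abs_sub_le _ _ _
        _ < |L₁ - L₂|/2 + |L₁ - L₂|/2 := by
            rw [abs_sub_comm L₁ ((B.sum:ℝ)/B.length)]
            exact add_lt_add e1 e2
        _ = |L₁ - L₂| := by ring
    exact lt_irrefl _ habs
  apply Set.Finite.subset
    ((List.finite_length_lt {x : ℤ // x ∈ h1.toFinset} (max N1 N2)).image
      (List.map Subtype.val))
  intro B hB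
  obtain ⟨hf1, hf2⟩ := hB
  have hBlen := hlen B hf1 hf2
  have hBmem : ∀ x ∈ B, x ∈ h1.toFinset := by
    intro x hx
    obtain ⟨m, hm⟩ := hf1
    rw [hm] at hx
    simp only [List.mem_map, List.mem_range] at hx
    obtain ⟨i, _, rfl⟩ := hx
    rw [Set.Finite.mem_toFinset]
    exact ⟨m + i, rfl⟩
  refine ⟨B.attach.map (fun x => ⟨x.1, hBmem x.1 x.2⟩), ?_, ?_⟩
  · simp only [Set.mem_setOf_eq, List.length_map, List.length_attach]
    exact hBlen
  · rw [List.map_map]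
    simp [Function.comp_def]
end

section
/- Let ω be an infinite word over a finite integer alphabet with bounded additive complexity and with slope(ω) = p/q for relatively prime integers p and q ≥ 1. Then for every k, ℓ ∈ ℕ with k, ℓ ≥ 1 there exists M(k,ℓ) ∈ ℕ such that every factor B of ω of length M(k,ℓ) contains as a factor an additive ℓ-power B₁B₂⋯B_ℓ in which k divides |B₁| and slope(B_i) = p/q for each i = 1, …, ℓ. -/
/-! ### Auxiliary lemmas -/

open Combinatorics in
/-- A finitary version of van der Waerden's theorem, derived from Hales–Jewett. -/
lemma aux_finitary_vdw (ℓ : ℕ) (κ : Type) [Finite κ] :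
    ∃ N : ℕ, ∀ C : ℕ → κ, ∃ b d : ℕ, 1 ≤ d ∧ b + ℓ * d ≤ N ∧
      ∀ i ≤ ℓ, C (b + i * d) = C b := by
  obtain ⟨ι, ιfin, hι⟩ := Line.exists_mono_in_high_dimension (Fin (ℓ+1)) κ
  refine ⟨ℓ * Fintype.card ι, fun C => ?_⟩
  obtain ⟨l, c, hl⟩ := hι (fun v => C (∑ i, (v i : ℕ)))
  classical
  set F : Finset ι := Finset.univ.filter (fun i => l.idxFun i = none) with hF
  set d : ℕ := F.card with hd
  set b : ℕ := ∑ i ∈ Fᶜ, ((l.idxFun i).map (fun a : Fin (ℓ+1) => (a : ℕ))).getD 0 with hb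
  have key : ∀ a : Fin (ℓ+1), (∑ i, ((l a) i : ℕ)) = b + (a : ℕ) * d := by
    intro a
    rw [← Finset.sum_add_sum_compl F, add_comm]
    congr 1
    · apply Finset.sum_congr rfl
      intro i hi
      rw [hF, Finset.mem_compl, Finset.mem_filter] at hi
      have : ∃ v, l.idxFun i = some v := by
        cases h : l.idxFun i with
        | none => exact absurd ⟨Finset.mem_univ _, h⟩ hi
        | some v => exact ⟨v, rfl⟩
      obtain ⟨v, hv⟩ := this
      simp [hv]
    · rw [Finset.sum_congr rfl (fun i hi => ?_), Finset.sum_const, smul_eq_mul, mul_comm]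
      rw [hF, Finset.mem_filter] at hi
      simp [hi.2]
  have hd1 : 1 ≤ d := by
    obtain ⟨i, hi⟩ := l.proper
    exact Finset.card_pos.mpr ⟨i, by rw [hF, Finset.mem_filter]; exact ⟨Finset.mem_univ _, hi⟩⟩
  have hbound : ∀ a : Fin (ℓ+1), b + (a : ℕ) * d ≤ ℓ * Fintype.card ι := by
    intro a
    rw [← key a]
    calc (∑ i, ((l a) i : ℕ)) ≤ ∑ _i : ι, ℓ :=
          Finset.sum_le_sum (fun i _ => Nat.lt_succ_iff.mp ((l a) i).isLt)
      _ = ℓ * Fintype.card ι := by rw [Finset.sum_const, smul_eq_mul, Finset.card_univ, mul_comm]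
  refine ⟨b, d, hd1, ?_, fun i hi => ?_⟩
  · have := hbound ⟨ℓ, Nat.lt_succ_self ℓ⟩
    simpa using this
  · have h1 : C (b + i * d) = c := by
      have := hl ⟨i, Nat.lt_succ_of_le hi⟩
      simp only [key] at this
      simpa using this
    have h2 : C b = c := by
      have := hl ⟨0, Nat.succ_pos ℓ⟩
      simp only [key] at this
      simpa using this
    rw [h1, h2]

/-- Partial sums of the word. -/
def Sp (ω : ℕ → ℤ) (n : ℕ) : ℤ := ∑ i ∈ Finset.range n, ω i

lemma Sp_add (ω : ℕ → ℤ) (m n : ℕ) :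
    Sp ω (m + n) = Sp ω m + ∑ i ∈ Finset.range n, ω (m + i) := by
  induction n with
  | zero => simp [Sp]
  | succ n ih =>
    rw [← Nat.add_assoc, Sp, Finset.sum_range_succ, ← Sp, ih, Finset.sum_range_succ]
    ring

lemma aux_list_map_range_sum (f : ℕ → ℤ) (n : ℕ) :
    ((List.range n).map f).sum = ∑ i ∈ Finset.range n, f i := by
  induction n with
  | zero => simp
  | succ n ih =>
    rw [List.range_succ, Finset.sum_range_succ, List.map_append, List.sum_append, ih]; simp

lemma aux_chain_le (h : ℕ → ℤ) (d : ℤ) (hd : 0 ≤ d)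
    (hstep : ∀ j, h (j+1) - h j ≤ d) :
    ∀ b, h b - h 0 ≤ d * ((((Finset.range (b+1)).image h).card : ℤ) - 1) := by
  intro b
  induction b using Nat.strong_induction_on with
  | _ b ih =>
    match b with
    | 0 => simp
    | (b+1) =>
      by_cases hmem : h (b+1) ∈ (Finset.range (b+1)).image h
      · obtain ⟨j, hj, hje⟩ := Finset.mem_image.mp hmem
        rw [Finset.mem_range] at hj
        have := ih j hj
        rw [hje] at this
        refine this.trans ?_
        have hsub : (Finset.range (j+1)).image h ⊆ (Finset.range (b+2)).image h :=
          Finset.image_subset_image (Finset.range_subset_range.mpr (by omega))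
        have := Finset.card_le_card hsub
        have : ((((Finset.range (j+1)).image h).card : ℤ))
            ≤ (((Finset.range (b+2)).image h).card : ℤ) := by exact_mod_cast this
        nlinarith
      · have hins : (Finset.range (b+2)).image h
            = insert (h (b+1)) ((Finset.range (b+1)).image h) := by
          rw [show b + 2 = (b+1) + 1 from rfl, Finset.range_add_one, Finset.image_insert]
        have hcard : (((Finset.range (b+2)).image h).card : ℤ)
            = (((Finset.range (b+1)).image h).card : ℤ) + 1 := by
          rw [hins, Finset.card_insert_of_notMem hmem]; push_cast; ring
        have h1 := ih b (by omega)
        have h2 := hstep b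
        rw [hcard]
        nlinarith

lemma aux_chain_abs (h : ℕ → ℤ) (d : ℤ) (hd : 0 ≤ d)
    (hstep : ∀ j, |h (j+1) - h j| ≤ d)
    (T : Finset ℤ) (hT : ∀ j, h j ∈ T) (b : ℕ) :
    |h b - h 0| ≤ d * ((T.card : ℤ) - 1) := by
  have hsub : ∀ b : ℕ, (Finset.range (b+1)).image h ⊆ T := by
    intro b x hx
    obtain ⟨j, _, hje⟩ := Finset.mem_image.mp hx
    exact hje ▸ hT j
  have hcard : ∀ b : ℕ, ((((Finset.range (b+1)).image h).card : ℤ)) ≤ (T.card : ℤ) := by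
    intro b; exact_mod_cast Finset.card_le_card (hsub b)
  have h1 : h b - h 0 ≤ d * ((T.card : ℤ) - 1) := by
    refine (aux_chain_le h d hd (fun j => (abs_le.mp (hstep j)).2) b).trans ?_
    have := hcard b
    nlinarith
  have h2 : -(h b - h 0) ≤ d * ((T.card : ℤ) - 1) := by
    have hneg := aux_chain_le (fun j => - h j) d hd
      (fun j => by have := (abs_le.mp (hstep j)).1; simp; linarith) b
    have himg : (Finset.range (b+1)).image (fun j => - h j)
        = ((Finset.range (b+1)).image h).image (fun x => -x) := by
      rw [Finset.image_image]; rfl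
    have hcard2 : (((Finset.range (b+1)).image (fun j => - h j)).card : ℤ) ≤ (T.card : ℤ) := by
      rw [himg, Finset.card_image_of_injective _ neg_injective]
      exact hcard b
    nlinarith
  exact abs_le.mpr ⟨by linarith, by linarith⟩

lemma aux_quasi (ω : ℕ → ℤ) (hfin : (Set.range ω).Finite) (hb : BoundedAddComplexity ω) :
    ∃ C : ℤ, 0 ≤ C ∧ ∀ m n : ℕ, |Sp ω (m + n) - Sp ω m - Sp ω n| ≤ C := by
  have hA : ∃ A : ℤ, 0 ≤ A ∧ ∀ i, |ω i| ≤ A := by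
    have : (Set.range (fun i => |ω i|)).Finite := by
      have : Set.range (fun i => |ω i|) ⊆ (fun x => |x|) '' Set.range ω := by
        rintro x ⟨i, rfl⟩; exact ⟨ω i, ⟨i, rfl⟩, rfl⟩
      exact (hfin.image _).subset this
    obtain ⟨A, hA⟩ := this.bddAbove
    exact ⟨A, le_trans (abs_nonneg _) (hA ⟨0, rfl⟩), fun i => hA ⟨i, rfl⟩⟩
  obtain ⟨A, hA0, hA⟩ := hA
  obtain ⟨M, hM⟩ := hb
  refine ⟨2 * A * M, by positivity, fun m n => ?_⟩
  rcases Nat.eq_zero_or_pos n with rfl | hn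
  · simp [Sp]; positivity
  obtain ⟨T, hTcard, hTmem⟩ := hM n hn
  set h : ℕ → ℤ := fun j => Sp ω (j + n) - Sp ω j with hh
  have hT : ∀ j, h j ∈ T := by
    intro j
    have : ((List.range n).map (fun i => ω (j + i))).sum ∈ T := by
      apply hTmem _ ⟨j, by simp⟩ (by simp)
    rw [aux_list_map_range_sum] at this
    have e : h j = ∑ i ∈ Finset.range n, ω (j + i) := by
      rw [hh]; simp only; rw [Sp_add]; ring
    rwa [e]
  have hstep : ∀ j, |h (j+1) - h j| ≤ 2 * A := by
    intro j
    have e1 : Sp ω (j + 1 + n) = Sp ω (j + n) + ω (j + n) := by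
      rw [show j + 1 + n = (j + n) + 1 from by omega, Sp, Finset.sum_range_succ, ← Sp]
    have e2 : Sp ω (j + 1) = Sp ω j + ω j := by
      rw [Sp, Finset.sum_range_succ, ← Sp]
    have : h (j+1) - h j = ω (j + n) - ω j := by rw [hh]; simp only; rw [e1, e2]; ring
    rw [this]
    calc |ω (j+n) - ω j| ≤ |ω (j+n)| + |ω j| := abs_sub _ _
      _ ≤ 2 * A := by have := hA (j+n); have := hA j; linarith
  have := aux_chain_abs h (2*A) (by positivity) hstep T hT m
  have hTM : (T.card : ℤ) ≤ (M : ℤ) := by exact_mod_cast hTcard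
  have h0 : h 0 = Sp ω n := by simp [hh, Sp]
  have hm : h m = Sp ω (m + n) - Sp ω m := by simp [hh, Nat.add_comm]
  rw [hm, h0] at this
  refine this.trans ?_
  nlinarith

lemma aux_Sbound (ω : ℕ → ℤ) (C : ℤ) (hC : 0 ≤ C)
    (hquasi : ∀ m n : ℕ, |Sp ω (m + n) - Sp ω m - Sp ω n| ≤ C)
    (α : ℝ) (hs : Filter.Tendsto (fun n : ℕ => ((Sp ω n : ℝ)) / n) Filter.atTop (nhds α)) :
    ∀ n : ℕ, |(Sp ω n : ℝ) - n * α| ≤ C := by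
  intro n
  rcases Nat.eq_zero_or_pos n with rfl | hn
  · simp [Sp]; exact_mod_cast hC
  have claim : ∀ j : ℕ, |Sp ω (j * n) - j * Sp ω n| ≤ j * C := by
    intro j
    induction j with
    | zero => simp [Sp]
    | succ j ih =>
      have h1 := hquasi (j * n) n
      have e : (j+1) * n = j * n + n := by ring
      have key : Sp ω ((j+1) * n) - ((j:ℤ)+1) * Sp ω n
          = (Sp ω (j*n + n) - Sp ω (j*n) - Sp ω n) + (Sp ω (j*n) - j * Sp ω n) := by
        rw [e]; ring
      calc |Sp ω ((j+1) * n) - ((j:ℤ)+1) * Sp ω n|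
          ≤ |Sp ω (j*n + n) - Sp ω (j*n) - Sp ω n| + |Sp ω (j*n) - (j:ℤ) * Sp ω n| := by
            rw [key]; exact abs_add_le _ _
        _ ≤ C + j * C := add_le_add h1 ih
        _ = ((j:ℤ)+1) * C := by ring
  have nr_pos : (0:ℝ) < (n:ℝ) := by exact_mod_cast hn
  set β : ℝ := (Sp ω n : ℝ) / n with hβ
  have hbound : ∀ j : ℕ, 1 ≤ j → |((Sp ω (j * n) : ℝ)) / ((j*n : ℕ):ℝ) - β| ≤ (C:ℝ)/n := by
    intro j hj
    have jr_pos : (0:ℝ) < (j:ℝ) := by exact_mod_cast hj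
    have hcl : |((Sp ω (j*n) : ℝ)) - (j:ℝ) * (Sp ω n : ℝ)| ≤ (j:ℝ) * C := by
      have h2 : (|Sp ω (j * n) - j * Sp ω n| : ℝ) ≤ ((j:ℤ) * C : ℤ) := by
        exact_mod_cast claim j
      push_cast at h2
      convert h2 using 2
    have e1 : ((Sp ω (j * n) : ℝ)) / ((j*n : ℕ):ℝ) - β
        = (((Sp ω (j*n) : ℝ)) - (j:ℝ) * (Sp ω n : ℝ)) / ((j:ℝ) * n) := by
      rw [hβ]; push_cast; field_simp
    rw [e1, abs_div, abs_of_pos (mul_pos jr_pos nr_pos),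
      div_le_div_iff₀ (mul_pos jr_pos nr_pos) nr_pos]
    calc |(Sp ω (j*n) : ℝ) - (j:ℝ) * (Sp ω n : ℝ)| * n ≤ ((j:ℝ) * C) * n := by
          apply mul_le_mul_of_nonneg_right hcl (le_of_lt nr_pos)
      _ = (C:ℝ) * ((j:ℝ) * n) := by ring
  have hsub : Filter.Tendsto (fun j : ℕ => ((Sp ω (j * n) : ℝ)) / ((j*n : ℕ):ℝ))
      Filter.atTop (nhds α) := by
    apply hs.comp
    apply Filter.tendsto_atTop_mono (fun j => Nat.le_mul_of_pos_right j hn) Filter.tendsto_id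
  have hmem : α ∈ Metric.closedBall β ((C:ℝ)/n) := by
    apply Metric.isClosed_closedBall.mem_of_tendsto hsub
    filter_upwards [Filter.eventually_ge_atTop 1] with j hj
    rw [Metric.mem_closedBall, Real.dist_eq]
    exact hbound j hj
  rw [Metric.mem_closedBall, Real.dist_eq] at hmem
  have e2 : (Sp ω n : ℝ) - n * α = (n:ℝ) * (β - α) := by
    rw [hβ]; field_simp
  rw [e2, abs_mul, abs_of_pos nr_pos, abs_sub_comm]
  calc (n:ℝ) * |α - β| ≤ (n:ℝ) * ((C:ℝ)/n) := by
        apply mul_le_mul_of_nonneg_left hmem (le_of_lt nr_pos)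
    _ = C := by field_simp

lemma aux_map_range_add (f : ℕ → ℤ) (a b : ℕ) :
    (List.range (a + b)).map f
      = (List.range a).map f ++ (List.range b).map (fun t => f (a + t)) := by
  rw [List.range_add, List.map_append, List.map_map]
  rfl

lemma aux_flatten_blocks (g : ℕ → ℤ) (W n : ℕ) :
    ((List.range n).map (fun i => (List.range W).map (fun t => g (i * W + t)))).flatten
      = (List.range (n * W)).map g := by
  induction n with
  | zero => simp
  | succ n ih =>
    rw [List.range_succ, List.map_append, List.flatten_append, ih]
    simp only [List.map_cons, List.map_nil, List.flatten_cons, List.flatten_nil, List.append_nil]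
    rw [show (n+1) * W = n * W + W from by ring, aux_map_range_add]

/-- Every long enough factor of a bounded-additive-complexity word of rational slope
p/q contains an additive ℓ-power whose block length is divisible by k and whose
blocks all have slope p/q. -/
theorem stmt7 (ω : ℕ → ℤ) (hfin : (Set.range ω).Finite)
    (hb : BoundedAddComplexity ω) (p q : ℤ) (hq : 1 ≤ q) (hpq : IsCoprime p q)
    (hs : HasSlope ω ((p : ℝ) / (q : ℝ))) :
    ∀ k ℓ : ℕ, 1 ≤ k → 1 ≤ ℓ →
      ∃ M : ℕ, ∀ B : List ℤ, Factor ω B → B.length = M →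
        ∃ L : List (List ℤ), L.length = ℓ ∧ L.flatten <:+: B ∧
          ∃ l : ℕ, 1 ≤ l ∧ k ∣ l ∧ ∃ s : ℤ,
            ∀ Bi ∈ L, Bi.length = l ∧ Bi.sum = s ∧ wordSlope Bi = (p : ℚ) / (q : ℚ) := by
  intro k ℓ hk hℓ
  obtain ⟨C, hC0, hquasi⟩ := aux_quasi ω hfin hb
  have hq0 : (0:ℤ) < q := by omega
  have hqR : (0:ℝ) < (q:ℝ) := by exact_mod_cast hq0
  have hs' : Filter.Tendsto (fun n : ℕ => ((Sp ω n : ℝ)) / n) Filter.atTop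
      (nhds ((p:ℝ)/(q:ℝ))) := by
    have e : (fun n : ℕ => ((Sp ω n : ℝ)) / n)
        = fun n : ℕ => (∑ i ∈ Finset.range n, (ω i : ℝ)) / n := by
      funext n; congr 1; rw [Sp]; push_cast; rfl
    rw [e]; exact hs
  have hSb := aux_Sbound ω C hC0 hquasi _ hs'
  set D : ℤ := q * C with hD
  have hf : ∀ n : ℕ, q * Sp ω n - p * (n : ℤ) ∈ Finset.Icc (-D) D := by
    intro n
    rw [Finset.mem_Icc, ← abs_le]
    have hreal : |((q * Sp ω n - p * (n:ℤ) : ℤ) : ℝ)| ≤ ((D : ℤ) : ℝ) := by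
      rw [hD]
      push_cast
      have e : (q:ℝ) * (Sp ω n:ℝ) - (p:ℝ) * (n:ℝ)
          = (q:ℝ) * ((Sp ω n:ℝ) - (n:ℝ) * ((p:ℝ)/(q:ℝ))) := by
        field_simp
      rw [e, abs_mul, abs_of_pos hqR]
      exact mul_le_mul_of_nonneg_left (hSb n) hqR.le
    exact_mod_cast hreal
  obtain ⟨N, hN⟩ := aux_finitary_vdw ℓ {x : ℤ // x ∈ Finset.Icc (-D) D}
  set Q : ℕ := q.toNat * k with hQdef
  have htn : ((q.toNat : ℕ) : ℤ) = q := Int.toNat_of_nonneg (by omega)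
  have hQ1 : 1 ≤ Q := by
    have h1 : 1 ≤ q.toNat := by omega
    calc 1 = 1 * 1 := rfl
      _ ≤ q.toNat * k := Nat.mul_le_mul h1 hk
  have hQcast : ((Q : ℕ) : ℤ) = q * (k : ℤ) := by rw [hQdef]; push_cast; rw [htn]
  refine ⟨N * Q, fun B hB hlen => ?_⟩
  obtain ⟨m, hm⟩ := hB
  rw [hlen] at hm
  obtain ⟨b, d, hd1, hbd, hmono⟩ :=
    hN (fun j => ⟨q * Sp ω (m + j * Q) - p * ((m + j * Q : ℕ) : ℤ), hf _⟩)
  have hfeq : ∀ i ≤ ℓ,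
      q * Sp ω (m + b * Q + i * (d * Q)) - p * ((m + b * Q + i * (d * Q) : ℕ) : ℤ)
        = q * Sp ω (m + b * Q) - p * ((m + b * Q : ℕ) : ℤ) := by
    intro i hi
    have h := congrArg Subtype.val (hmono i hi)
    simp only at h
    have eℕ : m + (b + i * d) * Q = m + b * Q + i * (d * Q) := by ring
    rw [eℕ] at h
    exact h
  set W : ℕ := d * Q with hW
  set blk : ℕ → List ℤ :=
    fun i => (List.range W).map (fun t => ω (m + b * Q + (i * W + t))) with hblk
  set s : ℤ := p * (d : ℤ) * (k : ℤ) with hs2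
  have hblksum : ∀ i : ℕ, (blk i).sum
      = Sp ω (m + b * Q + (i+1) * W) - Sp ω (m + b * Q + i * W) := by
    intro i
    rw [hblk]
    simp only
    rw [aux_list_map_range_sum]
    rw [show m + b * Q + (i+1) * W = (m + b * Q + i * W) + W from by ring, Sp_add]
    rw [show (∑ t ∈ Finset.range W, ω (m + b*Q + (i * W + t)))
        = ∑ t ∈ Finset.range W, ω ((m + b*Q + i * W) + t) from
      Finset.sum_congr rfl (fun t _ => by congr 1; omega)]
    ring
  have hsum : ∀ i < ℓ, (blk i).sum = s := by
    intro i hi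
    have h1 := hfeq i (le_of_lt hi)
    have h2 := hfeq (i+1) hi
    have hqne : (q:ℤ) ≠ 0 := by omega
    apply mul_left_cancel₀ hqne
    rw [hblksum i]
    have hc : ((m + b*Q + (i+1) * (d*Q) : ℕ) : ℤ)
        = ((m + b*Q + i * (d*Q) : ℕ) : ℤ) + (d:ℤ) * (q * (k:ℤ)) := by
      push_cast [hQcast]
      ring
    rw [hs2, hW]
    linear_combination h2 - h1 + p * hc
  have hlenblk : ∀ i : ℕ, (blk i).length = W := by intro i; rw [hblk]; simp
  refine ⟨(List.range ℓ).map blk, by simp, ?_, W, ?_, ?_, s, ?_⟩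
  · -- infix
    have hflat : ((List.range ℓ).map blk).flatten
        = (List.range (ℓ * W)).map (fun t => ω (m + b * Q + t)) := by
      rw [hblk]; exact aux_flatten_blocks (fun t => ω (m + b * Q + t)) W ℓ
    have hle : b * Q + ℓ * W ≤ N * Q := by
      have h3 : (b + ℓ * d) * Q ≤ N * Q := Nat.mul_le_mul_right _ hbd
      calc b * Q + ℓ * W = (b + ℓ * d) * Q := by rw [hW]; ring
        _ ≤ N * Q := h3
    set r : ℕ := N * Q - (b * Q + ℓ * W) with hr
    have hsplit : N * Q = b * Q + ℓ * W + r := by omega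
    refine ⟨(List.range (b * Q)).map (fun i => ω (m + i)),
            (List.range r).map (fun t => ω (m + (b * Q + ℓ * W + t))), ?_⟩
    rw [hm, hsplit, aux_map_range_add, aux_map_range_add, hflat]
    simp only [List.append_assoc]
    simp [Nat.add_assoc]
  · calc 1 = 1 * 1 := rfl
      _ ≤ d * Q := Nat.mul_le_mul hd1 hQ1
  · exact ⟨d * q.toNat, by rw [hW, hQdef]; ring⟩
  · intro Bi hBi
    obtain ⟨i, hi, rfl⟩ := List.mem_map.mp hBi
    have hiℓ : i < ℓ := List.mem_range.mp hi
    refine ⟨hlenblk i, hsum i hiℓ, ?_⟩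
    simp only [wordSlope]
    rw [hsum i hiℓ, hlenblk i]
    have hWq : ((W:ℕ):ℚ) = (d:ℚ) * ((q:ℚ) * (k:ℚ)) := by
      rw [hW, hQdef]; push_cast
      rw [show ((q.toNat:ℕ):ℚ) = (q:ℚ) from by exact_mod_cast htn]
    have hsq : ((s:ℤ):ℚ) = (p:ℚ) * (d:ℚ) * (k:ℚ) := by rw [hs2]; push_cast; ring
    rw [hsq, hWq]
    have hdq : (d:ℚ) ≠ 0 := Nat.cast_ne_zero.mpr (by omega)
    have hkq : (k:ℚ) ≠ 0 := Nat.cast_ne_zero.mpr (by omega)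
    have hqq : (q:ℚ) ≠ 0 := by
      exact_mod_cast (show (q:ℚ) ≠ 0 from by exact_mod_cast hq0.ne')
    field_simp
end
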